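/- Let E = (V, C, σ) be an election and a ∈ C. If the integral domination graph G(a) (on V ⊔ V with edge (i,j) iff a ⪰_i top(j)) admits a perfect matching, then plu(a) ≥ veto(a), where plu(a) is the number of voters ranking a first and veto(a) is the number of voters ranking a last. -/

import Mathlib

open Classical in
/-- If the integral domination graph of `a` admits a perfect matching, then the
plurality score of `a` is at least its veto score. -/
theorem stmt10 {V C : Type*} [Fintype V] [Fintype C]
    (σ : V → C → C → Prop) (hσ : ∀ i, IsStrictTotalOrder C (σ i))
    (top : V → C) (htop : ∀ i c, c ≠ top i → σ i (top i) c)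
    (a : C) (M : V ≃ V) (hM : ∀ i : V, a = top (M i) ∨ σ i a (top (M i))) :
    (Finset.univ.filter (fun i : V => ∀ c : C, c ≠ a → σ i c a)).card ≤
      (Finset.univ.filter (fun i : V => top i = a)).card := by
  apply Finset.card_le_card_of_injOn (fun i => M i)
  · intro i hi
    simp only [Finset.mem_coe, Finset.mem_filter, Finset.mem_univ, true_and] at hi ⊢
    rcases hM i with h | h
    · exact h.symm
    · by_contra hne
      have h2 := hi (top (M i)) hne
      have := hσ i
      exact (this.irrefl a) (this.trans _ _ _ h h2)
  · intro x _ y _ h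
    exact M.injective h
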